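/- Let p be a prime and K a field of characteristic p. For a polynomial g ∈ K[X], consider the polynomial ring K[X][Y] and the element g(X+Y) obtained by substituting X+Y into g. Then g(X+Y) − g(X) lies in the ideal of K[X][Y] generated by Y^p if and only if g is a polynomial in X^p, i.e., g lies in the image of the substitution map h(X) ↦ h(X^p) (Mathlib's Polynomial.expand K p). -/
import Mathlib

open Polynomial

lemma aeval_eq_taylor (K : Type*) [Field K] (g : Polynomial K) :
    Polynomial.aeval (Polynomial.C Polynomial.X + Polynomial.X :
        Polynomial (Polynomial K)) g =
      taylor (Polynomial.X : Polynomial K) (g.map (C : K →+* Polynomial K)) := by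
  rw [taylor_apply, comp, eval₂_map, aeval_def,
    IsScalarTower.algebraMap_eq K (Polynomial K) (Polynomial (Polynomial K)),
    Polynomial.algebraMap_eq, add_comm]
  rfl

lemma coeff_one_aeval (K : Type*) [Field K] (g : Polynomial K) :
    (Polynomial.aeval (Polynomial.C Polynomial.X + Polynomial.X :
        Polynomial (Polynomial K)) g).coeff 1 = derivative g := by
  rw [aeval_eq_taylor, taylor_coeff_one, derivative_map, eval_map, eval₂_C_X]

theorem sub_mem_span_Y_pow_p_iff_expand (p : ℕ) (hp : p.Prime)
    (K : Type*) [Field K] [CharP K p] (g : Polynomial K) :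
    (Polynomial.aeval (Polynomial.C Polynomial.X + Polynomial.X :
        Polynomial (Polynomial K)) g - Polynomial.C g ∈
      Ideal.span {(Polynomial.X : Polynomial (Polynomial K)) ^ p}) ↔
    g ∈ Set.range (Polynomial.expand K p) := by
  constructor
  · intro h
    rw [Ideal.mem_span_singleton] at h
    rw [X_pow_dvd_iff] at h
    have h1 := h 1 hp.one_lt
    rw [coeff_sub, coeff_one_aeval, coeff_C, if_neg one_ne_zero, sub_zero] at h1
    have hd : derivative g = 0 := by
      exact_mod_cast h1
    exact ⟨contract p g, expand_contract p hd hp.ne_zero⟩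
  · rintro ⟨h, rfl⟩
    rw [← Ideal.Quotient.eq]
    have := aeval_algHom_apply
      (Ideal.Quotient.mkₐ K (Ideal.span {(Polynomial.X : Polynomial (Polynomial K)) ^ p}))
    have hc : (Polynomial.C ((expand K p) h) : Polynomial (Polynomial K)) =
        aeval (Polynomial.C (Polynomial.X : Polynomial K)) ((expand K p) h) := by
      rw [show (Polynomial.C (Polynomial.X : Polynomial K) : Polynomial (Polynomial K)) =
        CAlgHom (R := K) (A := Polynomial K) (Polynomial.X : Polynomial K) from rfl,
        aeval_algHom_apply, aeval_X_left_apply]; rfl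
    rw [hc, expand_aeval, expand_aeval]
    have e1 := this ((Polynomial.C Polynomial.X + Polynomial.X : Polynomial (Polynomial K)) ^ p) h
    have e2 := this ((Polynomial.C (Polynomial.X : Polynomial K) : Polynomial (Polynomial K)) ^ p) h
    rw [Ideal.Quotient.mkₐ_eq_mk] at e1 e2
    haveI : Fact p.Prime := ⟨hp⟩
    have hm : Ideal.Quotient.mk (Ideal.span {(Polynomial.X : Polynomial (Polynomial K)) ^ p})
        ((Polynomial.C Polynomial.X + Polynomial.X : Polynomial (Polynomial K)) ^ p) =
        Ideal.Quotient.mk _ ((Polynomial.C (Polynomial.X : Polynomial K) : Polynomial (Polynomial K)) ^ p) := by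
      have hz : Ideal.Quotient.mk (Ideal.span {(Polynomial.X : Polynomial (Polynomial K)) ^ p})
          ((Polynomial.X : Polynomial (Polynomial K)) ^ p) = 0 :=
        Ideal.Quotient.eq_zero_iff_mem.2 (Ideal.mem_span_singleton_self _)
      rw [add_pow_char, map_add, hz, add_zero]
    rw [← e1, ← e2, hm]
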